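/- Let f : ℝⁿ → ℝ be differentiable such that for each coordinate i there is a constant Lᵢ > 0 with |∇ᵢf(x + α eᵢ) − ∇ᵢf(x)| ≤ Lᵢ|α| for all x ∈ ℝⁿ and α ∈ ℝ. Then for any x and any coordinate i, the point x⁺ = x − (1/Lᵢ)∇ᵢf(x)eᵢ satisfies f(x⁺) ≤ f(x) − (1/(2Lᵢ))(∇ᵢf(x))². Moreover, if instead x⁺ is obtained by exact coordinate optimization, x⁺ = x + α* eᵢ where α* minimizes α ↦ f(x + α eᵢ), the same bound f(x⁺) ≤ f(x) − (1/(2Lᵢ))(∇ᵢf(x))² holds. -/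

import Mathlib

open scoped RealInnerProductSpace

/-- coordinate descent progress bound with coordinate-wise
Lipschitz constants `Lᵢ`, both for the step-size `1/Lᵢ` and for exact
coordinate optimization. -/
theorem coordinate_descent_progress_Li {n : ℕ}
    (f : EuclideanSpace ℝ (Fin n) → ℝ)
    (f' : EuclideanSpace ℝ (Fin n) → EuclideanSpace ℝ (Fin n))
    (hf : ∀ x, HasGradientAt f (f' x) x)
    (L : Fin n → ℝ) (hL : ∀ i, 0 < L i)
    (hlip : ∀ (x : EuclideanSpace ℝ (Fin n)) (α : ℝ) (i : Fin n),
      |f' (x + α • EuclideanSpace.single i 1) i - f' x i| ≤ L i * |α|)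
    (x : EuclideanSpace ℝ (Fin n)) (i : Fin n) :
    f (x - ((1 / L i) * f' x i) • EuclideanSpace.single i 1)
      ≤ f x - 1 / (2 * L i) * (f' x i) ^ 2 ∧
    ∀ αs : ℝ,
      (∀ α : ℝ, f (x + αs • EuclideanSpace.single i 1)
        ≤ f (x + α • EuclideanSpace.single i 1)) →
      f (x + αs • EuclideanSpace.single i 1)
        ≤ f x - 1 / (2 * L i) * (f' x i) ^ 2 := by
  set e : EuclideanSpace ℝ (Fin n) := EuclideanSpace.single i 1 with he
  set g : ℝ → ℝ := fun t => f (x + t • e) with hgdef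
  set g' : ℝ → ℝ := fun t => f' (x + t • e) i with hg'def
  -- derivative of g
  have hg : ∀ t : ℝ, HasDerivAt g (g' t) t := by
    intro t
    have hpath : HasDerivAt (fun t : ℝ => x + t • e) e t := by
      simpa using ((hasDerivAt_id t).smul_const e).const_add x
    have hF := (hf (x + t • e)).hasFDerivAt
    have := hF.comp_hasDerivAt t hpath
    simp [InnerProductSpace.toDual_apply_apply, he,
      EuclideanSpace.inner_single_right, hg'def] at this
    exact this
  have hg0 : g' 0 = f' x i := by simp [hg'def]
  -- descent lemma for g
  have key : ∀ α : ℝ, g α ≤ g 0 + g' 0 * α + L i / 2 * α ^ 2 := by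
    intro α
    set φ : ℝ → ℝ := fun t => g (t * α) - g' 0 * (t * α) - L i * α ^ 2 * t ^ 2 / 2
      with hφdef
    have hφ' : ∀ t : ℝ, HasDerivAt φ (α * g' (t * α) - g' 0 * α - L i * α ^ 2 * t) t := by
      intro t
      have h1 : HasDerivAt (fun t : ℝ => g (t * α)) (g' (t * α) * α) t := by
        have := (hg (t * α)).comp t ((hasDerivAt_id t).mul_const α)
        simp at this
        exact this
      have h2 : HasDerivAt (fun t : ℝ => g' 0 * (t * α)) (g' 0 * α) t := by
        simpa using ((hasDerivAt_id t).mul_const α).const_mul (g' 0)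
      have h3 : HasDerivAt (fun t : ℝ => L i * α ^ 2 * t ^ 2 / 2)
          (L i * α ^ 2 * t) t := by
        have := ((hasDerivAt_pow 2 t).const_mul (L i * α ^ 2)).div_const 2
        convert this using 1
        · rfl
        · rfl
        · ring
      have := (h1.sub h2).sub h3
      convert this using 1
      · rfl
      · rfl
      · rfl
      · ring
    have hanti : AntitoneOn φ (Set.Icc 0 1) := by
      apply antitoneOn_of_deriv_nonpos (convex_Icc 0 1)
      · exact fun t _ => (hφ' t).continuousAt.continuousWithinAt
      · intro t _
        exact (hφ' t).differentiableAt.differentiableWithinAt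
      · intro t ht
        rw [interior_Icc] at ht
        rw [(hφ' t).deriv]
        have hlipg : |g' (t * α) - g' 0| ≤ L i * |t * α| := by
          have := hlip x (t * α) i
          simpa [hg'def] using this
        have : α * g' (t * α) - g' 0 * α ≤ L i * α ^ 2 * t := by
          have h1 : α * g' (t * α) - g' 0 * α = α * (g' (t * α) - g' 0) := by ring
          rw [h1]
          calc α * (g' (t * α) - g' 0) ≤ |α * (g' (t * α) - g' 0)| := le_abs_self _
            _ = |α| * |g' (t * α) - g' 0| := abs_mul _ _
            _ ≤ |α| * (L i * |t * α|) := by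
                exact mul_le_mul_of_nonneg_left hlipg (abs_nonneg _)
            _ = L i * α ^ 2 * |t| := by
                rw [abs_mul, ← sq_abs α]; ring
            _ = L i * α ^ 2 * t := by rw [abs_of_pos ht.1]
        linarith
    have := hanti (Set.left_mem_Icc.2 zero_le_one) (Set.right_mem_Icc.2 zero_le_one)
      zero_le_one
    simp only [hφdef, zero_mul, one_mul, mul_zero, sub_zero, one_pow, zero_pow] at this
    nlinarith [this]
  have hLpos := hL i
  -- value at the special step
  have hstep : g (-(1 / L i * f' x i)) ≤ f x - 1 / (2 * L i) * (f' x i) ^ 2 := by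
    have := key (-(1 / L i * f' x i))
    have hg00 : g 0 = f x := by simp [hgdef]
    rw [hg00, hg0] at this
    have hne : L i ≠ 0 := ne_of_gt hLpos
    calc g (-(1 / L i * f' x i))
        ≤ f x + f' x i * -(1 / L i * f' x i) + L i / 2 * (-(1 / L i * f' x i)) ^ 2 :=
          this
      _ = f x - 1 / (2 * L i) * (f' x i) ^ 2 := by field_simp; ring
  constructor
  · have heq : x - ((1 / L i) * f' x i) • e = x + (-(1 / L i * f' x i)) • e := by
      rw [neg_smul, sub_eq_add_neg]
    rw [heq]
    exact hstep
  · intro αs hmin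
    calc f (x + αs • e) ≤ f (x + (-(1 / L i * f' x i)) • e) := hmin _
      _ = g (-(1 / L i * f' x i)) := rfl
      _ ≤ f x - 1 / (2 * L i) * (f' x i) ^ 2 := hstep
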